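/- With a_n = (3n)!/(n!)³ and b_n = ∑_{k=0}^{n-1}(3/(3k+1) + 3/(3k+2) - 2/(k+1)), the function π₂(t) = 3·log(t)·∑_{n≥0} a_n t^{3n} + ∑_{n≥1} a_n b_n t^{3n} satisfies δ²π₂ - 27t³(δ+1)(δ+2)π₂ = 0 for 0 < t < 1/3, where δ = t·d/dt. -/

import Mathlib

open Real Finset

/-- The Euler operator `δ = t·d/dt` on real functions. -/
noncomputable def eulerOpR (g : ℝ → ℝ) (t : ℝ) : ℝ := t * deriv g t

/-- `a_n = (3n)!/(n!)³`. -/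
noncomputable def aCoef (n : ℕ) : ℝ := ((3 * n).factorial : ℝ) / ((n.factorial : ℝ)) ^ 3

/-- `b_n = ∑_{k=0}^{n-1} (3/(3k+1) + 3/(3k+2) - 2/(k+1))`. -/
noncomputable def bCoef (n : ℕ) : ℝ :=
    ∑ k ∈ Finset.range n, (3 / (3 * (k : ℝ) + 1) + 3 / (3 * (k : ℝ) + 2) - 2 / ((k : ℝ) + 1))

/-- `π₂(t) = 3 log(t) ∑_{n≥0} a_n t^{3n} + ∑_{n≥1} a_n b_n t^{3n}`. -/
noncomputable def pi₂ (t : ℝ) : ℝ :=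
    3 * Real.log t * (∑' n : ℕ, aCoef n * t ^ (3 * n)) +
      ∑' n : ℕ, aCoef (n + 1) * bCoef (n + 1) * t ^ (3 * (n + 1))



/-- geometric-with-polynomial summability -/
lemma summable_aux (k : ℕ) {q : ℝ} (hq0 : 0 ≤ q) (hq1 : q < 1) :
    Summable (fun n : ℕ => ((n : ℝ) + 1) ^ k * q ^ n) := by
  rcases eq_or_lt_of_le hq0 with h | h
  · apply summable_of_ne_finset_zero (s := {0})
    intro n hn
    simp only [Finset.mem_singleton] at hn
    simp [← h, zero_pow hn]
  · have S : Summable (fun n : ℕ => (n : ℝ) ^ k * q ^ n) :=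
      summable_pow_mul_geometric_of_norm_lt_one k (by rwa [Real.norm_eq_abs, abs_of_nonneg hq0])
    have S1 : Summable (fun n : ℕ => ((n + 1 : ℕ) : ℝ) ^ k * q ^ (n + 1)) :=
      (summable_nat_add_iff 1).2 S
    have := S1.mul_left q⁻¹
    apply this.congr
    intro n
    push_cast
    field_simp
    ring

def Nice (c : ℕ → ℝ) : Prop := ∃ C k, ∀ n : ℕ, |c n| ≤ C * ((n : ℝ) + 1) ^ k * 27 ^ n

lemma Nice.summable {c : ℕ → ℝ} (hc : Nice c) {y : ℝ} (hy : |y| < 1 / 3) :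
    Summable (fun n : ℕ => c n * y ^ (3 * n)) := by
  obtain ⟨C, k, hb⟩ := hc
  set q : ℝ := 27 * |y| ^ 3 with hqd
  have hq0 : 0 ≤ q := by positivity
  have hq1 : q < 1 := by
    have h3 : |y| ^ 3 < (1/3) ^ 3 := by
      apply pow_lt_pow_left₀ hy (abs_nonneg y)
      norm_num
    rw [hqd]; nlinarith
  apply Summable.of_norm_bounded (((summable_aux k hq0 hq1).mul_left C))
  intro n
  have hyq : |y| ^ (3 * n) = (|y| ^ 3) ^ n := by rw [← pow_mul]
  calc ‖c n * y ^ (3 * n)‖ = |c n| * |y| ^ (3 * n) := by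
        rw [norm_mul, Real.norm_eq_abs, Real.norm_eq_abs, abs_pow]
    _ ≤ (C * ((n : ℝ) + 1) ^ k * 27 ^ n) * |y| ^ (3 * n) := by
        apply mul_le_mul_of_nonneg_right (hb n) (by positivity)
    _ = C * (((n : ℝ) + 1) ^ k * q ^ n) := by
        rw [hyq, hqd, mul_pow]; ring

lemma Nice.euler {c : ℕ → ℝ} (hc : Nice c) : Nice (fun n => 3 * (n : ℝ) * c n) := by
  obtain ⟨C, k, hb⟩ := hc
  refine ⟨3 * C, k + 1, fun n => ?_⟩
  have h1 : |3 * (n : ℝ) * c n| = 3 * (n : ℝ) * |c n| := by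
    rw [abs_mul, abs_of_nonneg (by positivity : (0:ℝ) ≤ 3 * (n:ℝ))]
  rw [h1]
  have hBn : (0:ℝ) ≤ C * ((n : ℝ) + 1) ^ k * 27 ^ n := le_trans (abs_nonneg _) (hb n)
  calc 3 * (n : ℝ) * |c n| ≤ 3 * ((n:ℝ)+1) * (C * ((n : ℝ) + 1) ^ k * 27 ^ n) := by
        apply mul_le_mul (by nlinarith [abs_nonneg (c n)]) (hb n) (abs_nonneg _) (by positivity)
    _ = 3 * C * ((n : ℝ) + 1) ^ (k+1) * 27 ^ n := by ring

noncomputable def F (c : ℕ → ℝ) (y : ℝ) : ℝ := ∑' n : ℕ, c n * y ^ (3 * n)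
noncomputable def D (c : ℕ → ℝ) (y : ℝ) : ℝ := ∑' n : ℕ, 3 * (n : ℝ) * c n * y ^ (3 * n - 1)

lemma hasDerivAt_F {c : ℕ → ℝ} (hc : Nice c) {y : ℝ} (hy : |y| < 1 / 3) :
    HasDerivAt (F c) (D c y) y := by
  obtain ⟨C, k, hb⟩ := hc
  have hC0 : 0 ≤ C := le_trans (abs_nonneg _) (by simpa using hb 0)
  set r : ℝ := (|y| + 1 / 3) / 2 with hrd
  have hry : |y| < r := by rw [hrd]; linarith
  have hr3 : r < 1 / 3 := by rw [hrd]; linarith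
  have hr0 : 0 < r := lt_of_le_of_lt (abs_nonneg y) hry
  set q : ℝ := 27 * r ^ 3 with hqd
  have hq0 : 0 ≤ q := by positivity
  have hq1 : q < 1 := by
    have h3 : r ^ 3 < (1/3) ^ 3 := pow_lt_pow_left₀ hr3 hr0.le (by norm_num)
    rw [hqd]; nlinarith
  have hu : Summable (fun n : ℕ => (3 * C / r) * (((n : ℝ) + 1) ^ (k + 1) * q ^ n)) :=
    (summable_aux (k + 1) hq0 hq1).mul_left _
  have key := hasDerivAt_tsum_of_isPreconnected hu (isOpen_Ioo (a := -r) (b := r))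
      ((convex_Ioo (-r) r).isPreconnected)
      (g := fun n z => c n * z ^ (3 * n))
      (g' := fun n z => 3 * (n : ℝ) * c n * z ^ (3 * n - 1))
      (y₀ := y) (y := y) ?_ ?_ ?_ ?_ ?_
  · exact key
  · intro n z hz
    have := (hasDerivAt_pow (3 * n) z).const_mul (c n)
    refine this.congr_deriv ?_
    push_cast
    ring
  · intro n z hz
    have hzr : |z| ≤ r := le_of_lt (abs_lt.2 ⟨hz.1, hz.2⟩)
    cases n with
    | zero => simp; positivity
    | succ m =>
      have he : 3 * (m + 1) - 1 = 3 * m + 2 := by omega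
      have hnorm : ‖3 * ((m+1 : ℕ) : ℝ) * c (m+1) * z ^ (3 * (m+1) - 1)‖
          = 3 * ((m : ℝ) + 1) * |c (m+1)| * |z| ^ (3 * m + 2) := by
        rw [he, norm_mul, norm_mul, norm_pow, Real.norm_eq_abs, Real.norm_eq_abs,
          Real.norm_eq_abs, abs_mul, abs_of_nonneg (by norm_num : (0:ℝ) ≤ 3),
          abs_of_nonneg (by positivity : (0:ℝ) ≤ ((m+1 : ℕ) : ℝ))]
        push_cast
        ring
    -- goal after rw
      rw [hnorm]
      have hq' : (3 * C / r) * ((((m+1 : ℕ) : ℝ) + 1) ^ (k + 1) * q ^ (m+1))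
          = 3 * C * ((m : ℝ) + 2) ^ (k + 1) * (27 ^ (m+1) * r ^ (3 * m + 2)) := by
        have hqp : q ^ (m+1) = 27 ^ (m+1) * r ^ (3 * (m+1)) := by
          rw [hqd, mul_pow, ← pow_mul]
        rw [hqp, show 3 * (m+1) = (3 * m + 2) + 1 from by ring, pow_succ]
        push_cast
        field_simp
        ring
      rw [hq']
      have h1 : 3 * ((m : ℝ) + 1) * |c (m+1)| * |z| ^ (3 * m + 2)
          ≤ 3 * ((m : ℝ) + 1) * (C * (((m+1:ℕ) : ℝ) + 1) ^ k * 27 ^ (m+1)) * r ^ (3 * m + 2) := by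
        gcongr <;> first
          | positivity
          | exact hb (m+1)
          | exact hzr
          | exact le_trans (abs_nonneg _) (hb (m+1))
      refine le_trans h1 ?_
      push_cast
      have h2 : ((m:ℝ)+1) * ((m:ℝ)+2) ^ k ≤ ((m:ℝ)+2) ^ (k+1) := by
        rw [pow_succ]
        have : ((m:ℝ)+2) ^ k ≥ 0 := by positivity
        nlinarith
      have hP : (0:ℝ) ≤ C * 27 ^ (m+1) * r ^ (3*m+2) := by positivity
      have h4 := mul_le_mul_of_nonneg_right h2
        (mul_nonneg (by norm_num : (0:ℝ) ≤ 3) hP)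
      ring_nf at h4 ⊢
      nlinarith [h4]
  · exact (abs_lt.1 hry : -r < y ∧ y < r) |>.elim fun h1 h2 => ⟨h1, h2⟩
  · exact Nice.summable ⟨C, k, hb⟩ hy
  · exact (abs_lt.1 hry : -r < y ∧ y < r) |>.elim fun h1 h2 => ⟨h1, h2⟩

lemma euler_F (c : ℕ → ℝ) (y : ℝ) : y * D c y = F (fun n => 3 * (n : ℝ) * c n) y := by
  rw [D, ← tsum_mul_left, F]
  apply tsum_congr
  intro n
  cases n with
  | zero => simp
  | succ m =>
    rw [show 3 * (m + 1) - 1 = 3 * m + 2 from by omega,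
      show 3 * (m + 1) = (3 * m + 2) + 1 from by ring, pow_succ]
    ring



lemma aCoef_pos (n : ℕ) : 0 < aCoef n := by
  unfold aCoef
  positivity

lemma aCoef_key (n : ℕ) : ((n : ℝ) + 1) ^ 3 * aCoef (n + 1)
    = (3 * (n:ℝ) + 1) * (3 * (n:ℝ) + 2) * (3 * (n:ℝ) + 3) * aCoef n := by
  unfold aCoef
  have h1 : 3 * (n + 1) = (3 * n + 2) + 1 := by omega
  have h2 : ((3 * (n+1)).factorial : ℝ)
      = (3*(n:ℝ)+3) * ((3*(n:ℝ)+2)) * ((3*(n:ℝ)+1)) * ((3*n).factorial : ℝ) := by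
    rw [h1, Nat.factorial_succ, Nat.factorial_succ, Nat.factorial_succ]
    push_cast
    ring
  have h3 : ((n+1).factorial : ℝ) = ((n:ℝ)+1) * (n.factorial : ℝ) := by
    rw [Nat.factorial_succ]; push_cast; ring
  rw [h2, h3]
  have hf : (n.factorial : ℝ) ≠ 0 := Nat.cast_ne_zero.2 n.factorial_ne_zero
  have hn : ((n:ℝ)+1) ≠ 0 := by positivity
  field_simp

lemma aCoef_succ (n : ℕ) : aCoef (n + 1)
    = (3 * (n:ℝ) + 1) * (3 * (n:ℝ) + 2) * (3 * (n:ℝ) + 3) * aCoef n / ((n : ℝ) + 1) ^ 3 := by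
  have hn : (0:ℝ) < ((n:ℝ)+1) ^ 3 := by positivity
  rw [eq_div_iff hn.ne']
  rw [← aCoef_key n]; ring

lemma aCoef_le (n : ℕ) : aCoef n ≤ 27 ^ n := by
  induction n with
  | zero => simp [aCoef]
  | succ m ih =>
    have h1 : aCoef (m+1) ≤ 27 * aCoef m := by
      rw [aCoef_succ]
      rw [div_le_iff₀ (by positivity)]
      nlinarith [mul_nonneg (aCoef_pos m).le (by positivity : (0:ℝ) ≤ 27*(m:ℝ)^2+48*(m:ℝ)+21)]
    calc aCoef (m+1) ≤ 27 * aCoef m := h1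
      _ ≤ 27 * 27 ^ m := by nlinarith
      _ = 27 ^ (m+1) := by ring

lemma bCoef_succ (n : ℕ) : bCoef (n + 1) = bCoef n
    + (3 / (3 * (n : ℝ) + 1) + 3 / (3 * (n : ℝ) + 2) - 2 / ((n : ℝ) + 1)) := by
  unfold bCoef
  rw [Finset.sum_range_succ]

lemma bCoef_abs (n : ℕ) : |bCoef n| ≤ 8 * n := by
  induction n with
  | zero => simp [bCoef]
  | succ m ih =>
    rw [bCoef_succ]
    have p1 : (0:ℝ) < 3 * (m:ℝ) + 1 := by positivity
    have p2 : (0:ℝ) < 3 * (m:ℝ) + 2 := by positivity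
    have p3 : (0:ℝ) < (m:ℝ) + 1 := by positivity
    have b1 : 3 / (3 * (m:ℝ) + 1) ≤ 3 := by rw [div_le_iff₀ p1]; nlinarith
    have b2 : 3 / (3 * (m:ℝ) + 2) ≤ 3 := by rw [div_le_iff₀ p2]; nlinarith
    have b3 : 2 / ((m:ℝ) + 1) ≤ 2 := by rw [div_le_iff₀ p3]; nlinarith
    have q1 : 0 ≤ 3 / (3 * (m:ℝ) + 1) := by positivity
    have q2 : 0 ≤ 3 / (3 * (m:ℝ) + 2) := by positivity
    have q3 : 0 ≤ 2 / ((m:ℝ) + 1) := by positivity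
    have habs : |3 / (3 * (m:ℝ) + 1) + 3 / (3 * (m:ℝ) + 2) - 2 / ((m:ℝ) + 1)| ≤ 8 := by
      rw [abs_le]; constructor <;> nlinarith
    calc |bCoef m + _| ≤ |bCoef m| + |3 / (3 * (m:ℝ) + 1) + 3 / (3 * (m:ℝ) + 2) - 2 / ((m:ℝ) + 1)| :=
          abs_add_le _ _
      _ ≤ 8 * m + 8 := by linarith
      _ = 8 * ((m:ℕ)+1 : ℕ) := by push_cast; ring

lemma nice_a : Nice aCoef := by
  refine ⟨1, 0, fun n => ?_⟩
  rw [abs_of_pos (aCoef_pos n)]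
  simpa using aCoef_le n

lemma nice_ab : Nice (fun n => aCoef n * bCoef n) := by
  refine ⟨8, 1, fun n => ?_⟩
  have h1 : |aCoef n * bCoef n| = aCoef n * |bCoef n| := by
    rw [abs_mul, abs_of_pos (aCoef_pos n)]
  rw [h1]
  calc aCoef n * |bCoef n| ≤ 27 ^ n * (8 * n) := by
        apply mul_le_mul (aCoef_le n) (bCoef_abs n) (abs_nonneg _) (by positivity)
    _ ≤ 8 * ((n:ℝ) + 1) ^ 1 * 27 ^ n := by
        have : (0:ℝ) ≤ 27 ^ n := by positivity
        nlinarith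

/-- coefficient sequences -/
noncomputable def abC : ℕ → ℝ := fun n => aCoef n * bCoef n
noncomputable def aE1 : ℕ → ℝ := fun n => 3 * (n : ℝ) * aCoef n
noncomputable def aE2 : ℕ → ℝ := fun n => 3 * (n : ℝ) * aE1 n
noncomputable def abE1 : ℕ → ℝ := fun n => 3 * (n : ℝ) * abC n
noncomputable def abE2 : ℕ → ℝ := fun n => 3 * (n : ℝ) * abE1 n

lemma nice_abC : Nice abC := nice_ab
lemma nice_aE1 : Nice aE1 := nice_a.euler
lemma nice_aE2 : Nice aE2 := nice_aE1.euler
lemma nice_abE1 : Nice abE1 := nice_abC.euler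
lemma nice_abE2 : Nice abE2 := nice_abE1.euler

lemma euler_Fa (y : ℝ) : y * D aCoef y = F aE1 y := euler_F aCoef y
lemma euler_FaE1 (y : ℝ) : y * D aE1 y = F aE2 y := euler_F aE1 y
lemma euler_Fab (y : ℝ) : y * D abC y = F abE1 y := euler_F abC y
lemma euler_FabE1 (y : ℝ) : y * D abE1 y = F abE2 y := euler_F abE1 y

lemma pi2_eq {y : ℝ} (hy : |y| < 1 / 3) :
    pi₂ y = 3 * Real.log y * F aCoef y + F abC y := by
  unfold pi₂
  congr 1
  rw [F, Summable.tsum_eq_zero_add (nice_abC.summable hy)]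
  have h0 : abC 0 * y ^ (3 * 0) = 0 := by simp [abC, bCoef]
  rw [h0, zero_add]
  exact tsum_congr fun n => by simp only [abC]

/-- derivative of pi₂ on the interval -/
lemma pi2_hasDeriv {y : ℝ} (hy : y ∈ Set.Ioo (0:ℝ) (1/3)) :
    HasDerivAt pi₂ (3 * y⁻¹ * F aCoef y + 3 * Real.log y * D aCoef y + D abC y) y := by
  have hy0 : (0:ℝ) < y := hy.1
  have habs : |y| < 1 / 3 := abs_lt.2 ⟨by linarith [hy.2], hy.2⟩
  have hlog : HasDerivAt (fun x => 3 * Real.log x) (3 * y⁻¹) y :=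
    (Real.hasDerivAt_log hy0.ne').const_mul 3
  have h := (hlog.mul (hasDerivAt_F nice_a habs)).add (hasDerivAt_F nice_abC habs)
  have hev : (fun x => 3 * Real.log x * F aCoef x + F abC x) =ᶠ[nhds y] pi₂ := by
    apply Filter.eventuallyEq_of_mem
      (isOpen_Ioo.mem_nhds (show y ∈ Set.Ioo (-(1/3):ℝ) (1/3) from ⟨by linarith, hy.2⟩))
    intro z hz
    exact (pi2_eq (abs_lt.2 ⟨hz.1, hz.2⟩)).symm
  have h2 := h.congr_of_eventuallyEq hev.symm
  exact h2

noncomputable def Gfun (y : ℝ) : ℝ :=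
    3 * F aCoef y + 3 * Real.log y * F aE1 y + F abE1 y

lemma eulerOpR_pi2 {y : ℝ} (hy : y ∈ Set.Ioo (0:ℝ) (1/3)) :
    eulerOpR pi₂ y = Gfun y := by
  have hy0 : (0:ℝ) < y := hy.1
  rw [eulerOpR, (pi2_hasDeriv hy).deriv]
  have : y * (3 * y⁻¹ * F aCoef y + 3 * Real.log y * D aCoef y + D abC y)
      = 3 * F aCoef y + 3 * Real.log y * (y * D aCoef y) + y * D abC y := by
    field_simp
  rw [this, euler_Fa, euler_Fab, Gfun]

lemma Gfun_hasDeriv {y : ℝ} (hy : y ∈ Set.Ioo (0:ℝ) (1/3)) :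
    HasDerivAt Gfun
      (3 * D aCoef y + (3 * y⁻¹ * F aE1 y + 3 * Real.log y * D aE1 y) + D abE1 y) y := by
  have hy0 : (0:ℝ) < y := hy.1
  have habs : |y| < 1 / 3 := abs_lt.2 ⟨by linarith [hy.2], hy.2⟩
  have hlog : HasDerivAt (fun x => 3 * Real.log x) (3 * y⁻¹) y :=
    (Real.hasDerivAt_log hy0.ne').const_mul 3
  exact (((hasDerivAt_F nice_a habs).const_mul 3).add
    (hlog.mul (hasDerivAt_F nice_aE1 habs))).add (hasDerivAt_F nice_abE1 habs)

lemma eulerOpR2_pi2 {t : ℝ} (ht : t ∈ Set.Ioo (0:ℝ) (1/3)) :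
    eulerOpR (eulerOpR pi₂) t = 6 * F aE1 t + 3 * Real.log t * F aE2 t + F abE2 t := by
  have ht0 : (0:ℝ) < t := ht.1
  have hev : eulerOpR pi₂ =ᶠ[nhds t] Gfun :=
    Filter.eventuallyEq_of_mem (isOpen_Ioo.mem_nhds ht) (fun z hz => eulerOpR_pi2 hz)
  rw [eulerOpR, hev.deriv_eq, (Gfun_hasDeriv ht).deriv]
  have : t * (3 * D aCoef t + (3 * t⁻¹ * F aE1 t + 3 * Real.log t * D aE1 t) + D abE1 t)
      = 3 * (t * D aCoef t) + 3 * F aE1 t + 3 * Real.log t * (t * D aE1 t)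
        + (t * D abE1 t) := by
    field_simp
    ring
  rw [this, euler_Fa, euler_FaE1, euler_FabE1]
  ring

lemma R1 (n : ℕ) : aE2 (n + 1) = 27 * (aE2 n + 3 * aE1 n + 2 * aCoef n) := by
  simp only [aE2, aE1]
  have hn : ((n:ℝ) + 1) ≠ 0 := by positivity
  apply mul_left_cancel₀ hn
  push_cast
  linear_combination 9 * aCoef_key n

lemma R2 (n : ℕ) : 6 * aE1 (n + 1) + abE2 (n + 1)
    = 27 * (abE2 n + 6 * aE1 n + 9 * aCoef n + 3 * abE1 n + 2 * abC n) := by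
  simp only [aE1, abE2, abE1, abC]
  have h1 : (3 * (n:ℝ) + 1) ≠ 0 := by positivity
  have h2 : (3 * (n:ℝ) + 2) ≠ 0 := by positivity
  have h3 : ((n:ℝ) + 1) ≠ 0 := by positivity
  rw [aCoef_succ n, bCoef_succ n]
  push_cast
  field_simp
  ring

section main
variable {t : ℝ} (ht : t ∈ Set.Ioo (0:ℝ) (1/3))

lemma L1 {t : ℝ} (ht : t ∈ Set.Ioo (0:ℝ) (1/3)) :
    F aE2 t = 27 * t ^ 3 * (F aE2 t + 3 * F aE1 t + 2 * F aCoef t) := by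
  have habs : |t| < 1 / 3 := abs_lt.2 ⟨by linarith [ht.1, ht.2], ht.2⟩
  have Sa := nice_a.summable habs
  have Sa1 := nice_aE1.summable habs
  have Sa2 := nice_aE2.summable habs
  have hsum : F aE2 t + 3 * F aE1 t + 2 * F aCoef t
      = ∑' n : ℕ, (aE2 n + 3 * aE1 n + 2 * aCoef n) * t ^ (3 * n) := by
    rw [F, F, F, ← tsum_mul_left (a := (3:ℝ)), ← tsum_mul_left (a := (2:ℝ)),
      ← Summable.tsum_add (Sa2) ((Sa1.mul_left 3)), ← Summable.tsum_add (Sa2.add (Sa1.mul_left 3)) (Sa.mul_left 2)]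
    exact tsum_congr fun n => by ring
  have shift : F aE2 t = ∑' n : ℕ, aE2 (n + 1) * t ^ (3 * (n + 1)) := by
    rw [F, Summable.tsum_eq_zero_add Sa2]
    have h0 : aE2 0 * t ^ (3 * 0) = 0 := by simp [aE2, aE1]
    rw [h0, zero_add]
  rw [hsum]
  conv_lhs => rw [shift]
  rw [← tsum_mul_left (a := 27 * t ^ 3)]
  exact tsum_congr fun n => by
    rw [R1 n, show 3 * (n + 1) = 3 * n + 3 from by ring, pow_add]
    ring

lemma L2 {t : ℝ} (ht : t ∈ Set.Ioo (0:ℝ) (1/3)) :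
    6 * F aE1 t + F abE2 t = 27 * t ^ 3 *
      (F abE2 t + 6 * F aE1 t + 9 * F aCoef t + 3 * F abE1 t + 2 * F abC t) := by
  have habs : |t| < 1 / 3 := abs_lt.2 ⟨by linarith [ht.1, ht.2], ht.2⟩
  have Sa := nice_a.summable habs
  have Sa1 := nice_aE1.summable habs
  have Sab := nice_abC.summable habs
  have Sab1 := nice_abE1.summable habs
  have Sab2 := nice_abE2.summable habs
  have hL : 6 * F aE1 t + F abE2 t
      = ∑' n : ℕ, (6 * aE1 n + abE2 n) * t ^ (3 * n) := by
    rw [F, F, ← tsum_mul_left (a := (6:ℝ)), ← Summable.tsum_add (Sa1.mul_left 6) Sab2]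
    exact tsum_congr fun n => by ring
  have hR : F abE2 t + 6 * F aE1 t + 9 * F aCoef t + 3 * F abE1 t + 2 * F abC t
      = ∑' n : ℕ, (abE2 n + 6 * aE1 n + 9 * aCoef n + 3 * abE1 n + 2 * abC n) * t ^ (3 * n) := by
    rw [F, F, F, F, F, ← tsum_mul_left (a := (6:ℝ)), ← tsum_mul_left (a := (9:ℝ)),
      ← tsum_mul_left (a := (3:ℝ)), ← tsum_mul_left (a := (2:ℝ)),
      ← Summable.tsum_add Sab2 (Sa1.mul_left 6),
      ← Summable.tsum_add (Sab2.add (Sa1.mul_left 6)) (Sa.mul_left 9),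
      ← Summable.tsum_add ((Sab2.add (Sa1.mul_left 6)).add (Sa.mul_left 9)) (Sab1.mul_left 3),
      ← Summable.tsum_add (((Sab2.add (Sa1.mul_left 6)).add (Sa.mul_left 9)).add (Sab1.mul_left 3))
        (Sab.mul_left 2)]
    exact tsum_congr fun n => by ring
  have SL : Summable (fun n : ℕ => (6 * aE1 n + abE2 n) * t ^ (3 * n)) :=
    ((Sa1.mul_left 6).add Sab2).congr fun n => by ring
  have shift : (∑' n : ℕ, (6 * aE1 n + abE2 n) * t ^ (3 * n))
      = ∑' n : ℕ, (6 * aE1 (n + 1) + abE2 (n + 1)) * t ^ (3 * (n + 1)) := by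
    rw [Summable.tsum_eq_zero_add SL]
    have h0 : (6 * aE1 0 + abE2 0) * t ^ (3 * 0) = 0 := by simp [aE1, abE2, abE1]
    rw [h0, zero_add]
  rw [hL, hR, shift, ← tsum_mul_left (a := 27 * t ^ 3)]
  exact tsum_congr fun n => by
    rw [R2 n, show 3 * (n + 1) = 3 * n + 3 from by ring, pow_add]
    ring

end main


/-- `δ²π₂ - 27 t³ (δ+1)(δ+2) π₂ = 0` for `0 < t < 1/3`. -/
theorem stmt_14 (t : ℝ) (h0 : 0 < t) (h1 : t < 1 / 3) :
    eulerOpR (eulerOpR pi₂) t -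
      27 * t ^ 3 *
        (eulerOpR (eulerOpR pi₂) t + 3 * eulerOpR pi₂ t + 2 * pi₂ t) = 0 := by
  have ht : t ∈ Set.Ioo (0:ℝ) (1/3) := ⟨h0, h1⟩
  have habs : |t| < 1 / 3 := abs_lt.2 ⟨by linarith, h1⟩
  rw [eulerOpR2_pi2 ht, eulerOpR_pi2 ht, Gfun, pi2_eq habs]
  linear_combination 3 * Real.log t * L1 ht + L2 ht
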